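/- For 2 < p < ∞ and all complex numbers z, w, the integral ∫₀^∞ t^{p−1} M(w/t, z/t) dt equals γ_p Φ_p(z,w), where M(z,w) = (|w|² − (|z|−1)²)·1_{|z|+|w|>1} and γ_p = (½ p (p−1)(p−2) α_p)^{−1}. -/

import Mathlib

open MeasureTheory

/-- The function M(z,w) = (|w|² − (|z|−1)²)·1_{|z|+|w|>1}. -/
noncomputable def M (z w : ℂ) : ℝ :=
  if 1 < ‖z‖ + ‖w‖ then
    (‖w‖) ^ 2 - (‖z‖ - 1) ^ 2
  else 0

/-- p* = max(p, p'). -/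
noncomputable def pstar (p : ℝ) : ℝ := max p (p / (p - 1))

/-- Burkholder's constant α_p. -/
noncomputable def alphap (p : ℝ) : ℝ := p * (1 - 1 / pstar p) ^ (p - 1)

/-- Burkholder's function Φ_p. -/
noncomputable def Phip (p : ℝ) (z w : ℂ) : ℝ :=
  alphap p * ((pstar p - 1) * ‖z‖ - ‖w‖) *
    (‖z‖ + ‖w‖) ^ (p - 1)

/-- For 2 < p < ∞, ∫₀^∞ t^{p−1} M(w/t, z/t) dt = γ_p Φ_p(z,w). -/
theorem stmt2 (p : ℝ) (hp : 2 < p) (z w : ℂ) :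
    (∫ t in Set.Ioi (0 : ℝ), t ^ (p - 1) * M (w / (t : ℂ)) (z / (t : ℂ)))
      = ((1 / 2) * p * (p - 1) * (p - 2) * alphap p)⁻¹ * Phip p z w := by
  have hp0 : (0:ℝ) < p := by linarith
  have hp1 : (0:ℝ) < p - 1 := by linarith
  have hp2 : (0:ℝ) < p - 2 := by linarith
  have hps : pstar p = p := by
    unfold pstar
    rw [max_eq_left]
    rw [div_le_iff₀ (by linarith)]
    nlinarith
  have hα : 0 < alphap p := by
    rw [alphap, hps]
    have h1 : (0:ℝ) < 1 - 1/p := by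
      rw [sub_pos, div_lt_one hp0]; linarith
    positivity
  by_cases hzw : ‖z‖ + ‖w‖ = 0
  · have hz : z = 0 := by
      have := norm_nonneg z
      have := norm_nonneg w
      have : ‖z‖ = 0 := by linarith
      simpa using this
    have hw : w = 0 := by
      have := norm_nonneg z
      have := norm_nonneg w
      have : ‖w‖ = 0 := by linarith
      simpa using this
    subst hz; subst hw
    simp [M, Phip]
    norm_num
  set A := ‖w‖ with hA_def
  set B := ‖z‖ with hB_def
  have hA : 0 ≤ A := norm_nonneg w
  have hB : 0 ≤ B := norm_nonneg z
  have hs : 0 < B + A := by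
    rcases lt_or_eq_of_le (by positivity : (0:ℝ) ≤ B + A) with h | h
    · exact h
    · exact absurd h.symm (by rw [hB_def, hA_def] at *; exact hzw)
  have key : ∀ t ∈ Set.Ioi (0:ℝ), t ^ (p-1) * M (w/(t:ℂ)) (z/(t:ℂ)) =
      (Set.Ioo (0:ℝ) (B+A)).indicator
        (fun t => (B^2 - A^2) * t^(p-3) + 2*A*t^(p-2) - t^(p-1)) t := by
    intro t ht
    have ht : (0:ℝ) < t := ht
    have habs : ‖((t:ℝ):ℂ)‖ = t := by
      rw [Complex.norm_of_nonneg ht.le]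
    have hMa : ‖w/(t:ℂ)‖ = A / t := by rw [norm_div, habs]
    have hMb : ‖z/(t:ℂ)‖ = B / t := by rw [norm_div, habs]
    rw [M, hMa, hMb]
    have hcond : (1 < A/t + B/t) ↔ t < B + A := by
      rw [← add_div, lt_div_iff₀ ht, one_mul]
      constructor <;> intro <;> linarith
    by_cases hlt : t < B + A
    · rw [if_pos (hcond.mpr hlt), Set.indicator_of_mem (Set.mem_Ioo.mpr ⟨ht, hlt⟩)]
      have e1 : t ^ (p-1) = t^(p-2) * t := by
        rw [show p-1 = (p-2)+1 by ring, Real.rpow_add_one ht.ne']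
      have e2 : t ^ (p-2) = t^(p-3) * t := by
        rw [show p-2 = (p-3)+1 by ring, Real.rpow_add_one ht.ne']
      rw [e1, e2]
      field_simp
      ring
    · rw [if_neg (fun h => hlt (hcond.mp h)),
        Set.indicator_of_notMem (fun h => hlt h.2), mul_zero]
  rw [setIntegral_congr_fun measurableSet_Ioi key,
    setIntegral_indicator measurableSet_Ioo,
    Set.inter_eq_self_of_subset_right Set.Ioo_subset_Ioi_self,
    ← integral_Ioc_eq_integral_Ioo,
    ← intervalIntegral.integral_of_le hs.le]
  have i1 : IntervalIntegrable (fun t:ℝ => (B^2 - A^2) * t^(p-3)) volume 0 (B+A) :=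
    (intervalIntegral.intervalIntegrable_rpow' (by linarith)).const_mul _
  have i2 : IntervalIntegrable (fun t:ℝ => 2*A * t^(p-2)) volume 0 (B+A) :=
    (intervalIntegral.intervalIntegrable_rpow' (by linarith)).const_mul _
  have i3 : IntervalIntegrable (fun t:ℝ => t^(p-1)) volume 0 (B+A) :=
    intervalIntegral.intervalIntegrable_rpow' (by linarith)
  rw [intervalIntegral.integral_sub (i1.add i2) i3,
    intervalIntegral.integral_add i1 i2,
    intervalIntegral.integral_const_mul, intervalIntegral.integral_const_mul,
    integral_rpow (Or.inl (by linarith)),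
    integral_rpow (Or.inl (by linarith)),
    integral_rpow (Or.inl (by linarith))]
  rw [show p-3+1 = p-2 by ring, show p-2+1 = p-1 by ring, show p-1+1 = p by ring,
    Real.zero_rpow hp2.ne', Real.zero_rpow hp1.ne', Real.zero_rpow hp0.ne']
  rw [Phip, hps, ← hA_def, ← hB_def]
  have f1 : (B+A)^(p-1) = (B+A)^(p-2)*(B+A) := by
    have := Real.rpow_add_one hs.ne' (p-2)
    rwa [show p-2+1 = p-1 by ring] at this
  have f2 : (B+A)^p = (B+A)^(p-1)*(B+A) := by
    have := Real.rpow_add_one hs.ne' (p-1)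
    rwa [show p-1+1 = p by ring] at this
  rw [f2, f1]
  field_simp
  ring
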